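/- The dependency coefficient of down-sampling vanishes off a sublattice: the coefficient α(u,v,u',v') relating F(X_d)[u,v] to F(X)[u',v'] satisfies α(u,v,u',v') = 0 unless u'-u is a multiple of 2H/k and v'-v is a multiple of 2W/k; and when u' - u = a·(2H/k) and v' - v = b·(2W/k) for integers a, b, α(u,v,u',v') = β(u',v')/k², where β(u',v') = Σ_{s=0}^{k-1} Σ_{t=0}^{k-1} w_{s,t}·exp(j2π(u's/(2H)+v't/(2W))). -/

import Mathlib

open Finset

noncomputable def dft (H W : ℤ) (X : ℤ → ℤ → ℂ) (u v : ℤ) : ℂ :=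
  ∑ x ∈ Finset.Icc (-H) (H - 1), ∑ y ∈ Finset.Icc (-W) (W - 1),
    X x y * Complex.exp (-(2 * (Real.pi : ℂ) * Complex.I) *
      ((u : ℂ) * (x : ℂ) / (2 * (H : ℂ)) + (v : ℂ) * (y : ℂ) / (2 * (W : ℂ))))

noncomputable def idft (H W : ℤ) (F : ℤ → ℤ → ℂ) (x y : ℤ) : ℂ :=
  (1 / (4 * (H : ℂ) * (W : ℂ))) *
    ∑ u ∈ Finset.Icc (-H) (H - 1), ∑ v ∈ Finset.Icc (-W) (W - 1),
      F u v * Complex.exp ((2 * (Real.pi : ℂ) * Complex.I) *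
        ((u : ℂ) * (x : ℂ) / (2 * (H : ℂ)) + (v : ℂ) * (y : ℂ) / (2 * (W : ℂ))))

noncomputable def crop (H W H' W' : ℤ) (F : ℤ → ℤ → ℂ) (u v : ℤ) : ℂ :=
  (((H' * W' : ℤ) : ℂ) / ((H * W : ℤ) : ℂ)) * F u v

noncomputable def downsample (k : ℤ) (w : ℤ → ℤ → ℂ) (X : ℤ → ℤ → ℂ) (x' y' : ℤ) : ℂ :=
  ∑ s ∈ Finset.Icc (0 : ℤ) (k - 1), ∑ t ∈ Finset.Icc (0 : ℤ) (k - 1),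
    w s t * X (k * x' + s) (k * y' + t)

noncomputable def beta (H W k : ℤ) (w : ℤ → ℤ → ℂ) (u' v' : ℤ) : ℂ :=
  ∑ s ∈ Finset.Icc (0 : ℤ) (k - 1), ∑ t ∈ Finset.Icc (0 : ℤ) (k - 1),
    w s t * Complex.exp ((2 * (Real.pi : ℂ) * Complex.I) *
      ((u' : ℂ) * (s : ℂ) / (2 * (H : ℂ)) + (v' : ℂ) * (t : ℂ) / (2 * (W : ℂ))))

noncomputable def alpha (H W k : ℤ) (w : ℤ → ℤ → ℂ) (u v u' v' : ℤ) : ℂ :=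
  if (2 * H / k ∣ u' - u) ∧ (2 * W / k ∣ v' - v) then beta H W k w u' v' / (k : ℂ) ^ 2 else 0

section AuxDownsampleAlpha
open Complex

private 
lemma sum_Icc_int_eq_range (k : ℤ) (hk : 0 < k) (f : ℤ → ℂ) :
    ∑ a ∈ Finset.Icc (0:ℤ) (k-1), f a = ∑ n ∈ Finset.range k.toNat, f (n:ℤ) := by
  refine Finset.sum_nbij' (fun a => a.toNat) (fun n => (n:ℤ)) ?_ ?_ ?_ ?_ ?_ <;>
    intro a ha <;>
    simp only [Finset.mem_Icc, Finset.mem_range] at ha ⊢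
  · omega
  · omega
  · omega
  · omega
  · congr 1; omega

private lemma geom_sum_exp (k m : ℤ) (hk : 0 < k) :
    ∑ a ∈ Finset.Icc (0:ℤ) (k-1),
      Complex.exp (-(2 * (Real.pi:ℂ) * Complex.I) * ((a:ℂ) * (m:ℂ) / (k:ℂ)))
    = if (k ∣ m) then (k:ℂ) else 0 := by
  have hk0 : (k:ℂ) ≠ 0 := by exact_mod_cast hk.ne'
  have hktn : ((k.toNat : ℕ) : ℂ) = (k:ℂ) := by
    norm_cast; omega
  set z : ℂ := Complex.exp (-(2 * (Real.pi:ℂ) * Complex.I) * ((m:ℂ) / (k:ℂ))) with hz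
  have hterm : ∀ a : ℤ, Complex.exp (-(2 * (Real.pi:ℂ) * Complex.I) * ((a:ℂ) * (m:ℂ) / (k:ℂ))) = z ^ a := by
    intro a
    rw [hz, ← Complex.exp_int_mul]
    ring_nf
  rw [Finset.sum_congr rfl (fun a _ => hterm a), sum_Icc_int_eq_range k hk]
  simp only [zpow_natCast]
  by_cases hdvd : k ∣ m
  · obtain ⟨c, rfl⟩ := hdvd
    have hz1 : z = 1 := by
      rw [hz]
      have : -(2 * (Real.pi:ℂ) * Complex.I) * ((↑(k*c):ℂ) / (k:ℂ)) = ((-c : ℤ):ℂ) * (2 * (Real.pi:ℂ) * Complex.I) := by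
        push_cast
        field_simp
      rw [this, Complex.exp_int_mul_two_pi_mul_I]
    rw [if_pos ⟨c, rfl⟩]
    simp [hz1, hktn]
  · have hpi : (2 * (Real.pi:ℂ) * Complex.I) ≠ 0 := by
      simp [Real.pi_ne_zero, Complex.I_ne_zero]
    have hz1 : z ≠ 1 := by
      intro h
      rw [hz, Complex.exp_eq_one_iff] at h
      obtain ⟨n, hn⟩ := h
      apply hdvd
      have h2 : (2 * (Real.pi:ℂ) * Complex.I) * (m:ℂ) = (2 * (Real.pi:ℂ) * Complex.I) * ((k * (-n) : ℤ):ℂ) := by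
        push_cast
        field_simp at hn
        linear_combination (-(2 * (Real.pi:ℂ) * Complex.I)) * hn
      have h3 : (m:ℂ) = ((k * (-n) : ℤ):ℂ) := mul_left_cancel₀ hpi h2
      exact ⟨-n, by exact_mod_cast h3⟩
    rw [if_neg hdvd, geom_sum_eq hz1]
    have hzk : z ^ k.toNat = 1 := by
      rw [hz, ← Complex.exp_nat_mul]
      have : (k.toNat : ℂ) * (-(2 * (Real.pi:ℂ) * Complex.I) * ((m:ℂ) / (k:ℂ))) = ((-m : ℤ):ℂ) * (2 * (Real.pi:ℂ) * Complex.I) := by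
        rw [hktn]
        push_cast
        field_simp
      rw [this, Complex.exp_int_mul_two_pi_mul_I]
    rw [hzk]
    simp


private lemma key1D (H' k : ℤ) (hk : 0 < k) (hH' : 0 < H') (u x s : ℤ)
    (hs1 : 0 ≤ s) (hs2 : s ≤ k - 1) :
    ∑ u' ∈ Finset.Icc (-(k*H')) (k*H'-1),
      (if (2*H' ∣ u' - u) then
        Complex.exp (-(2 * (Real.pi:ℂ) * Complex.I) * ((u':ℂ) * ((x:ℂ)-(s:ℂ)) / (2*((k:ℂ)*(H':ℂ))))) else 0)
    = if x % k = s then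
        (k:ℂ) * Complex.exp (-(2 * (Real.pi:ℂ) * Complex.I) * ((u:ℂ) * ((x:ℂ)-(s:ℂ)) / (2*((k:ℂ)*(H':ℂ))))) else 0 := by
  have h2H' : 0 < 2*H' := by omega
  have h2H'0 : (2*H' : ℤ) ≠ 0 := h2H'.ne'
  have hkC : (k:ℂ) ≠ 0 := by exact_mod_cast hk.ne'
  have hH'C : (H':ℂ) ≠ 0 := by exact_mod_cast hH'.ne'
  set u₀ : ℤ := -(k*H') + (u + k*H') % (2*H') with hu₀
  have hmod1 : 0 ≤ (u + k*H') % (2*H') := Int.emod_nonneg _ h2H'0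
  have hmod2 : (u + k*H') % (2*H') < 2*H' := Int.emod_lt_of_pos _ h2H'
  have hdm := Int.mul_ediv_add_emod (u + k*H') (2*H')
  obtain ⟨c, hc⟩ : ∃ c : ℤ, u₀ = u + 2*H'*c :=
    ⟨-((u + k*H') / (2*H')), by rw [hu₀]; linear_combination hdm⟩
  have hu₀lb : -(k*H') ≤ u₀ := by omega
  have hu₀ub : u₀ ≤ -(k*H') + 2*H' - 1 := by omega
  -- rewrite the sum over the filtered set
  rw [← Finset.sum_filter]
  -- bijection with Icc 0 (k-1)
  have hbij :
      ∑ u' ∈ (Finset.Icc (-(k*H')) (k*H'-1)).filter (fun u' => 2*H' ∣ u' - u),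
        Complex.exp (-(2 * (Real.pi:ℂ) * Complex.I) * ((u':ℂ) * ((x:ℂ)-(s:ℂ)) / (2*((k:ℂ)*(H':ℂ)))))
      = ∑ a ∈ Finset.Icc (0:ℤ) (k-1),
        Complex.exp (-(2 * (Real.pi:ℂ) * Complex.I) * ((↑(u₀ + 2*H'*a):ℂ) * ((x:ℂ)-(s:ℂ)) / (2*((k:ℂ)*(H':ℂ))))) := by
    refine Finset.sum_nbij' (fun u' => (u' - u₀)/(2*H')) (fun a => u₀ + 2*H'*a) ?_ ?_ ?_ ?_ ?_
    · intro u' hu'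
      simp only [Finset.mem_filter, Finset.mem_Icc] at hu'
      obtain ⟨⟨hl, hr⟩, hdvd⟩ := hu'
      have hdvd' : 2*H' ∣ u' - u₀ := by
        rw [hc]
        have : u' - (u + 2*H'*c) = (u' - u) - 2*H'*c := by ring
        rw [this]
        exact dvd_sub hdvd ⟨c, rfl⟩
      obtain ⟨d, hd⟩ := hdvd'
      have hdval : (u' - u₀)/(2*H') = d := by rw [hd, Int.mul_ediv_cancel_left _ h2H'0]
      simp only [Finset.mem_Icc, hdval]
      constructor
      · nlinarith
      · nlinarith
    · intro a ha
      simp only [Finset.mem_Icc] at ha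
      simp only [Finset.mem_filter, Finset.mem_Icc]
      refine ⟨⟨by nlinarith, by nlinarith⟩, ?_⟩
      rw [hc]
      have : u + 2*H'*c + 2*H'*a - u = 2*H'*(c+a) := by ring
      rw [this]
      exact ⟨c+a, rfl⟩
    · intro u' hu'
      simp only [Finset.mem_filter, Finset.mem_Icc] at hu'
      have hdvd' : 2*H' ∣ u' - u₀ := by
        rw [hc]
        have : u' - (u + 2*H'*c) = (u' - u) - 2*H'*c := by ring
        rw [this]
        exact dvd_sub hu'.2 ⟨c, rfl⟩
      obtain ⟨d, hd⟩ := hdvd'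
      show u₀ + 2*H' * ((u' - u₀)/(2*H')) = u'
      rw [hd, Int.mul_ediv_cancel_left _ h2H'0]
      omega
    · intro a ha
      show (u₀ + 2*H'*a - u₀)/(2*H') = a
      have : u₀ + 2*H'*a - u₀ = 2*H'*a := by ring
      rw [this, Int.mul_ediv_cancel_left _ h2H'0]
    · intro u' hu'
      simp only [Finset.mem_filter, Finset.mem_Icc] at hu'
      have hdvd' : 2*H' ∣ u' - u₀ := by
        rw [hc]
        have : u' - (u + 2*H'*c) = (u' - u) - 2*H'*c := by ring
        rw [this]
        exact dvd_sub hu'.2 ⟨c, rfl⟩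
      obtain ⟨d, hd⟩ := hdvd'
      show _ = Complex.exp (-(2 * (Real.pi:ℂ) * Complex.I) * ((↑(u₀ + 2*H' * ((u' - u₀)/(2*H'))):ℂ) * ((x:ℂ)-(s:ℂ)) / (2*((k:ℂ)*(H':ℂ)))))
      rw [show (u₀ + 2*H' * ((u' - u₀)/(2*H')) : ℤ) = u' from by
        rw [hd, Int.mul_ediv_cancel_left _ h2H'0]; linarith]
  rw [hbij]
  -- split each exponential
  have hsplit : ∀ a : ℤ,
      Complex.exp (-(2 * (Real.pi:ℂ) * Complex.I) * ((↑(u₀ + 2*H'*a):ℂ) * ((x:ℂ)-(s:ℂ)) / (2*((k:ℂ)*(H':ℂ)))))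
      = Complex.exp (-(2 * (Real.pi:ℂ) * Complex.I) * ((u₀:ℂ) * ((x:ℂ)-(s:ℂ)) / (2*((k:ℂ)*(H':ℂ)))))
        * Complex.exp (-(2 * (Real.pi:ℂ) * Complex.I) * ((a:ℂ) * ((x - s : ℤ):ℂ) / (k:ℂ))) := by
    intro a
    rw [← Complex.exp_add]
    congr 1
    push_cast
    field_simp
    ring
  rw [Finset.sum_congr rfl (fun a _ => hsplit a), ← Finset.mul_sum, geom_sum_exp k (x - s) hk]
  have hiff : (x % k = s) ↔ (k ∣ x - s) := by
    constructor
    · intro h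
      have h2 := Int.mul_ediv_add_emod x k
      exact ⟨x / k, by linarith⟩
    · rintro ⟨d, hd⟩
      have hx : x = s + d * k := by linarith
      rw [hx, Int.add_mul_emod_self_right]
      exact Int.emod_eq_of_lt hs1 (by omega)
  by_cases hcase : x % k = s
  · rw [if_pos ((hiff).mp hcase), if_pos hcase]
    obtain ⟨d, hd⟩ := (hiff).mp hcase
    rw [mul_comm]
    congr 1
    -- exp(u₀ (x-s)/(2kH')) = exp(u (x-s)/(2kH')) since u₀ = u + 2H'c and x-s = k d
    rw [hc]
    have harg : ((↑(u + 2*H'*c):ℂ)) * ((x:ℂ)-(s:ℂ)) / (2*((k:ℂ)*(H':ℂ)))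
        = (u:ℂ) * ((x:ℂ)-(s:ℂ)) / (2*((k:ℂ)*(H':ℂ))) + ((c*d : ℤ):ℂ) := by
      have hxs : (x:ℂ) - (s:ℂ) = (k:ℂ) * (d:ℂ) := by push_cast [hd]; exact_mod_cast congrArg (Int.cast : ℤ → ℂ) hd
      push_cast [hxs]
      field_simp
    rw [mul_comm (-(2 * (Real.pi:ℂ) * Complex.I)), harg, add_mul, Complex.exp_add]
    have : ((c*d : ℤ):ℂ) * (-(2 * (Real.pi:ℂ) * Complex.I)) = ((-(c*d) : ℤ):ℂ) * (2 * (Real.pi:ℂ) * Complex.I) := by push_cast; ring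
    rw [this, Complex.exp_int_mul_two_pi_mul_I, mul_one, mul_comm]
  · rw [if_neg (fun h => hcase (hiff.mpr h)), if_neg hcase, mul_zero]



private lemma sum_strides (H' k : ℤ) (hk : 0 < k) (hH' : 0 < H') (f : ℤ → ℤ → ℂ) :
    ∑ x' ∈ Finset.Icc (-H') (H'-1), ∑ s ∈ Finset.Icc (0:ℤ) (k-1), f x' s
    = ∑ x ∈ Finset.Icc (-(k*H')) (k*H'-1), f (x/k) (x%k) := by
  rw [← Finset.sum_product']
  refine Finset.sum_nbij' (fun p => k*p.1 + p.2) (fun x => (x/k, x%k)) ?_ ?_ ?_ ?_ ?_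
  · rintro ⟨x', s⟩ hp
    simp only [Finset.mem_product, Finset.mem_Icc] at hp
    simp only [Finset.mem_Icc]
    obtain ⟨⟨h1,h2⟩,h3,h4⟩ := hp
    constructor
    · nlinarith
    · nlinarith
  · intro x hx
    simp only [Finset.mem_Icc] at hx
    simp only [Finset.mem_product, Finset.mem_Icc]
    have hr1 := Int.emod_nonneg x hk.ne'
    have hr2 := Int.emod_lt_of_pos x hk
    refine ⟨⟨?_, ?_⟩, hr1, by omega⟩
    · have h := Int.ediv_le_ediv hk hx.1
      rwa [show -(k*H') = k * (-H') by ring, Int.mul_ediv_cancel_left _ hk.ne'] at h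
    · have h := Int.ediv_le_ediv hk hx.2
      rwa [show k*H'-1 = (k-1) + k * (H'-1) by ring,
        Int.add_mul_ediv_left _ _ hk.ne',
        Int.ediv_eq_zero_of_lt (show (0:ℤ) ≤ k-1 by omega) (show k-1 < k by omega), zero_add] at h
  · rintro ⟨x', s⟩ hp
    simp only [Finset.mem_product, Finset.mem_Icc] at hp
    show ((k*x'+s)/k, (k*x'+s)%k) = (x', s)
    rw [show k*x'+s = s + k*x' by ring, Int.add_mul_ediv_left _ _ hk.ne',
      Int.ediv_eq_zero_of_lt hp.2.1 (by omega), zero_add,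
      Int.add_mul_emod_self_left, Int.emod_eq_of_lt hp.2.1 (by omega)]
  · intro x hx
    show k * (x/k) + x%k = x
    exact Int.mul_ediv_add_emod x k
  · rintro ⟨x', s⟩ hp
    simp only [Finset.mem_product, Finset.mem_Icc] at hp
    show f x' s = f ((k*x'+s)/k) ((k*x'+s)%k)
    rw [show k*x'+s = s + k*x' by ring, Int.add_mul_ediv_left _ _ hk.ne',
      Int.ediv_eq_zero_of_lt hp.2.1 (by omega), zero_add,
      Int.add_mul_emod_self_left, Int.emod_eq_of_lt hp.2.1 (by omega)]


private lemma swap4 {M : Type*} [AddCommMonoid M] (A B C D : Finset ℤ) (g : ℤ → ℤ → ℤ → ℤ → M) :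
    ∑ a ∈ A, ∑ b ∈ B, ∑ c ∈ C, ∑ d ∈ D, g a b c d
    = ∑ c ∈ C, ∑ d ∈ D, ∑ a ∈ A, ∑ b ∈ B, g a b c d := by
  calc ∑ a ∈ A, ∑ b ∈ B, ∑ c ∈ C, ∑ d ∈ D, g a b c d
      = ∑ a ∈ A, ∑ c ∈ C, ∑ b ∈ B, ∑ d ∈ D, g a b c d :=
        Finset.sum_congr rfl fun a _ => Finset.sum_comm
    _ = ∑ c ∈ C, ∑ a ∈ A, ∑ b ∈ B, ∑ d ∈ D, g a b c d := Finset.sum_comm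
    _ = ∑ c ∈ C, ∑ a ∈ A, ∑ d ∈ D, ∑ b ∈ B, g a b c d :=
        Finset.sum_congr rfl fun c _ => Finset.sum_congr rfl fun a _ => Finset.sum_comm
    _ = ∑ c ∈ C, ∑ d ∈ D, ∑ a ∈ A, ∑ b ∈ B, g a b c d :=
        Finset.sum_congr rfl fun c _ => Finset.sum_comm

private lemma inner_eval (H' W' k : ℤ) (hk : 0 < k) (hH' : 0 < H') (hW' : 0 < W')
    (w : ℤ → ℤ → ℂ) (u v x y : ℤ) :
    ∑ u' ∈ Finset.Icc (-(k*H')) (k*H'-1), ∑ v' ∈ Finset.Icc (-(k*W')) (k*W'-1),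
      alpha (k*H') (k*W') k w u v u' v' *
        Complex.exp (-(2 * (Real.pi:ℂ) * Complex.I) *
          ((u':ℂ) * (x:ℂ) / (2 * ((k*H' : ℤ):ℂ)) + (v':ℂ) * (y:ℂ) / (2 * ((k*W' : ℤ):ℂ))))
    = w (x % k) (y % k) *
        Complex.exp (-(2 * (Real.pi:ℂ) * Complex.I) *
          ((u:ℂ) * ((x / k : ℤ):ℂ) / (2 * (H':ℂ)) + (v:ℂ) * ((y / k : ℤ):ℂ) / (2 * (W':ℂ)))) := by
  have hkC : (k:ℂ) ≠ 0 := by exact_mod_cast hk.ne'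
  have hH'C : (H':ℂ) ≠ 0 := by exact_mod_cast hH'.ne'
  have hW'C : (W':ℂ) ≠ 0 := by exact_mod_cast hW'.ne'
  have h2Hk : 2*(k*H')/k = 2*H' := by
    rw [show 2*(k*H') = k*(2*H') by ring, Int.mul_ediv_cancel_left _ hk.ne']
  have h2Wk : 2*(k*W')/k = 2*W' := by
    rw [show 2*(k*W') = k*(2*W') by ring, Int.mul_ediv_cancel_left _ hk.ne']
  -- Step 1: rewrite each summand
  have claim : ∀ u' v',
      alpha (k*H') (k*W') k w u v u' v' *
        Complex.exp (-(2 * (Real.pi:ℂ) * Complex.I) *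
          ((u':ℂ) * (x:ℂ) / (2 * ((k*H' : ℤ):ℂ)) + (v':ℂ) * (y:ℂ) / (2 * ((k*W' : ℤ):ℂ))))
      = (1/(k:ℂ)^2) * ∑ s ∈ Finset.Icc (0:ℤ) (k-1), ∑ t ∈ Finset.Icc (0:ℤ) (k-1),
          w s t *
          ((if 2*H' ∣ u' - u then
              Complex.exp (-(2 * (Real.pi:ℂ) * Complex.I) * ((u':ℂ) * ((x:ℂ)-(s:ℂ)) / (2*((k:ℂ)*(H':ℂ))))) else 0) *
           (if 2*W' ∣ v' - v then
              Complex.exp (-(2 * (Real.pi:ℂ) * Complex.I) * ((v':ℂ) * ((y:ℂ)-(t:ℂ)) / (2*((k:ℂ)*(W':ℂ))))) else 0)) := by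
    intro u' v'
    unfold alpha beta
    rw [h2Hk, h2Wk]
    by_cases hP : (2*H' ∣ u' - u)
    · by_cases hQ : (2*W' ∣ v' - v)
      · rw [if_pos ⟨hP, hQ⟩]
        simp only [if_pos hP, if_pos hQ]
        rw [div_mul_eq_mul_div, div_eq_mul_inv, mul_comm _ ((((k:ℂ))^2)⁻¹), ← one_div]
        congr 1
        rw [Finset.sum_mul]
        refine Finset.sum_congr rfl fun s hs => ?_
        rw [Finset.sum_mul]
        refine Finset.sum_congr rfl fun t ht => ?_
        rw [mul_assoc, ← Complex.exp_add, ← Complex.exp_add]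
        congr 2
        push_cast
        field_simp
        ring
      · rw [if_neg (by tauto)]
        simp only [if_neg hQ, mul_zero, zero_mul, Finset.sum_const_zero, mul_zero]
    · rw [if_neg (by tauto)]
      simp only [if_neg hP, zero_mul, mul_zero, Finset.sum_const_zero, mul_zero]
  rw [Finset.sum_congr rfl fun u' _ => Finset.sum_congr rfl fun v' _ => claim u' v']
  rw [Finset.sum_congr rfl (fun u' _ => (Finset.mul_sum _ _ _).symm), ← Finset.mul_sum]
  -- now: 1/k^2 * ∑u'∑v'∑s∑t ...
  rw [swap4]
  -- factor per (s,t)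
  have hfact : ∀ s t : ℤ,
      (∑ u' ∈ Finset.Icc (-(k*H')) (k*H'-1), ∑ v' ∈ Finset.Icc (-(k*W')) (k*W'-1),
        w s t *
        ((if 2*H' ∣ u' - u then
            Complex.exp (-(2 * (Real.pi:ℂ) * Complex.I) * ((u':ℂ) * ((x:ℂ)-(s:ℂ)) / (2*((k:ℂ)*(H':ℂ))))) else 0) *
         (if 2*W' ∣ v' - v then
            Complex.exp (-(2 * (Real.pi:ℂ) * Complex.I) * ((v':ℂ) * ((y:ℂ)-(t:ℂ)) / (2*((k:ℂ)*(W':ℂ))))) else 0)))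
      = w s t *
        ((∑ u' ∈ Finset.Icc (-(k*H')) (k*H'-1),
            if 2*H' ∣ u' - u then
              Complex.exp (-(2 * (Real.pi:ℂ) * Complex.I) * ((u':ℂ) * ((x:ℂ)-(s:ℂ)) / (2*((k:ℂ)*(H':ℂ))))) else 0) *
         (∑ v' ∈ Finset.Icc (-(k*W')) (k*W'-1),
            if 2*W' ∣ v' - v then
              Complex.exp (-(2 * (Real.pi:ℂ) * Complex.I) * ((v':ℂ) * ((y:ℂ)-(t:ℂ)) / (2*((k:ℂ)*(W':ℂ))))) else 0)) := by
    intro s t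
    rw [mul_assoc, Finset.sum_mul_sum]
    simp only [Finset.mul_sum]
  rw [Finset.sum_congr rfl fun s _ => Finset.sum_congr rfl fun t _ => hfact s t]
  -- apply key1D in both directions
  rw [Finset.sum_congr rfl fun s hs => Finset.sum_congr rfl fun t ht => by
    rw [key1D H' k hk hH' u x s (Finset.mem_Icc.mp hs).1 (Finset.mem_Icc.mp hs).2,
        key1D W' k hk hW' v y t (Finset.mem_Icc.mp ht).1 (Finset.mem_Icc.mp ht).2]]
  -- collapse the ite sums
  have hxmem : x % k ∈ Finset.Icc (0:ℤ) (k-1) := by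
    simp only [Finset.mem_Icc]
    exact ⟨Int.emod_nonneg x hk.ne', by have := Int.emod_lt_of_pos x hk; omega⟩
  have hymem : y % k ∈ Finset.Icc (0:ℤ) (k-1) := by
    simp only [Finset.mem_Icc]
    exact ⟨Int.emod_nonneg y hk.ne', by have := Int.emod_lt_of_pos y hk; omega⟩
  rw [Finset.sum_eq_single_of_mem (x % k) hxmem (fun s _ hne => by
    simp [if_neg (show ¬ x % k = s from fun h => hne h.symm)])]
  rw [Finset.sum_eq_single_of_mem (y % k) hymem (fun t _ hne => by
    simp [if_neg (show ¬ y % k = t from fun h => hne h.symm)])]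
  rw [if_pos rfl, if_pos rfl]
  -- final arithmetic
  have hxc : (x:ℂ) - ((x % k : ℤ):ℂ) = (k:ℂ) * ((x / k : ℤ):ℂ) := by
    have h : x - x % k = k * (x / k) := by
      have := Int.mul_ediv_add_emod x k; linarith
    have h2 := congrArg (fun n : ℤ => (n:ℂ)) h
    push_cast at h2
    exact h2
  have hyc : (y:ℂ) - ((y % k : ℤ):ℂ) = (k:ℂ) * ((y / k : ℤ):ℂ) := by
    have h : y - y % k = k * (y / k) := by
      have := Int.mul_ediv_add_emod y k; linarith
    have h2 := congrArg (fun n : ℤ => (n:ℂ)) h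
    push_cast at h2
    exact h2
  have hAB : Complex.exp (-(2 * (Real.pi:ℂ) * Complex.I) * ((u:ℂ) * ((x:ℂ)-((x % k : ℤ):ℂ)) / (2*((k:ℂ)*(H':ℂ)))))
      * Complex.exp (-(2 * (Real.pi:ℂ) * Complex.I) * ((v:ℂ) * ((y:ℂ)-((y % k : ℤ):ℂ)) / (2*((k:ℂ)*(W':ℂ)))))
      = Complex.exp (-(2 * (Real.pi:ℂ) * Complex.I) *
          ((u:ℂ) * ((x / k : ℤ):ℂ) / (2 * (H':ℂ)) + (v:ℂ) * ((y / k : ℤ):ℂ) / (2 * (W':ℂ)))) := by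
    rw [← Complex.exp_add]
    congr 1
    rw [hxc, hyc]
    field_simp
    ring
  calc (1/(k:ℂ)^2) * (w (x % k) (y % k) *
        (((k:ℂ) * Complex.exp (-(2 * (Real.pi:ℂ) * Complex.I) * ((u:ℂ) * ((x:ℂ)-((x % k : ℤ):ℂ)) / (2*((k:ℂ)*(H':ℂ)))))) *
         ((k:ℂ) * Complex.exp (-(2 * (Real.pi:ℂ) * Complex.I) * ((v:ℂ) * ((y:ℂ)-((y % k : ℤ):ℂ)) / (2*((k:ℂ)*(W':ℂ))))))))
      = w (x % k) (y % k) *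
        (Complex.exp (-(2 * (Real.pi:ℂ) * Complex.I) * ((u:ℂ) * ((x:ℂ)-((x % k : ℤ):ℂ)) / (2*((k:ℂ)*(H':ℂ)))))
         * Complex.exp (-(2 * (Real.pi:ℂ) * Complex.I) * ((v:ℂ) * ((y:ℂ)-((y % k : ℤ):ℂ)) / (2*((k:ℂ)*(W':ℂ)))))) := by
        field_simp
    _ = _ := by rw [hAB]


end AuxDownsampleAlpha

open Complex in
theorem downsample_alpha_support (H W k : ℤ) (hk : 0 < k) (hH : 0 < H) (hW : 0 < W)
    (hkH : k ∣ H) (hkW : k ∣ W) (w : ℤ → ℤ → ℂ) :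
    ∀ (X : ℤ → ℤ → ℂ) (u v : ℤ),
      dft (H / k) (W / k) (downsample k w X) u v
        = ∑ u' ∈ Finset.Icc (-H) (H - 1), ∑ v' ∈ Finset.Icc (-W) (W - 1),
            alpha H W k w u v u' v' * dft H W X u' v' := by
  intro X u v
  obtain ⟨H', rfl⟩ := hkH
  obtain ⟨W', rfl⟩ := hkW
  have hH' : 0 < H' := by by_contra h; push_neg at h; nlinarith
  have hW' : 0 < W' := by by_contra h; push_neg at h; nlinarith
  rw [Int.mul_ediv_cancel_left _ hk.ne', Int.mul_ediv_cancel_left _ hk.ne']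
  -- LHS
  have hLHS : dft H' W' (downsample k w X) u v
      = ∑ x ∈ Finset.Icc (-(k*H')) (k*H'-1), ∑ y ∈ Finset.Icc (-(k*W')) (k*W'-1),
          w (x % k) (y % k) * X x y *
            Complex.exp (-(2 * (Real.pi:ℂ) * Complex.I) *
              ((u:ℂ) * ((x / k : ℤ):ℂ) / (2 * (H':ℂ)) + (v:ℂ) * ((y / k : ℤ):ℂ) / (2 * (W':ℂ)))) := by
    unfold dft downsample
    calc ∑ x' ∈ Finset.Icc (-H') (H'-1), ∑ y' ∈ Finset.Icc (-W') (W'-1),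
          (∑ s ∈ Finset.Icc (0:ℤ) (k-1), ∑ t ∈ Finset.Icc (0:ℤ) (k-1),
            w s t * X (k*x'+s) (k*y'+t)) *
          Complex.exp (-(2 * (Real.pi:ℂ) * Complex.I) *
            ((u:ℂ) * (x':ℂ) / (2 * (H':ℂ)) + (v:ℂ) * (y':ℂ) / (2 * (W':ℂ))))
        = ∑ x' ∈ Finset.Icc (-H') (H'-1), ∑ s ∈ Finset.Icc (0:ℤ) (k-1),
            ∑ y' ∈ Finset.Icc (-W') (W'-1), ∑ t ∈ Finset.Icc (0:ℤ) (k-1),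
              w s t * X (k*x'+s) (k*y'+t) *
                Complex.exp (-(2 * (Real.pi:ℂ) * Complex.I) *
                  ((u:ℂ) * (x':ℂ) / (2 * (H':ℂ)) + (v:ℂ) * (y':ℂ) / (2 * (W':ℂ)))) := by
          refine Finset.sum_congr rfl fun x' _ => ?_
          rw [Finset.sum_congr rfl fun y' _ => ?_]
          · exact Finset.sum_comm
          · rw [Finset.sum_mul]
            exact Finset.sum_congr rfl fun s _ => Finset.sum_mul _ _ _
      _ = ∑ x ∈ Finset.Icc (-(k*H')) (k*H'-1),
            ∑ y' ∈ Finset.Icc (-W') (W'-1), ∑ t ∈ Finset.Icc (0:ℤ) (k-1),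
              w (x % k) t * X x (k*y'+t) *
                Complex.exp (-(2 * (Real.pi:ℂ) * Complex.I) *
                  ((u:ℂ) * ((x / k : ℤ):ℂ) / (2 * (H':ℂ)) + (v:ℂ) * (y':ℂ) / (2 * (W':ℂ)))) := by
          rw [sum_strides H' k hk hH']
          exact Finset.sum_congr rfl fun x _ => by rw [Int.mul_ediv_add_emod x k]
      _ = ∑ x ∈ Finset.Icc (-(k*H')) (k*H'-1), ∑ y ∈ Finset.Icc (-(k*W')) (k*W'-1),
          w (x % k) (y % k) * X x y *
            Complex.exp (-(2 * (Real.pi:ℂ) * Complex.I) *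
              ((u:ℂ) * ((x / k : ℤ):ℂ) / (2 * (H':ℂ)) + (v:ℂ) * ((y / k : ℤ):ℂ) / (2 * (W':ℂ)))) := by
          refine Finset.sum_congr rfl fun x _ => ?_
          rw [sum_strides W' k hk hW']
          exact Finset.sum_congr rfl fun y _ => by rw [Int.mul_ediv_add_emod y k]
  rw [hLHS]
  -- RHS
  have hRHS : ∑ u' ∈ Finset.Icc (-(k*H')) (k*H'-1), ∑ v' ∈ Finset.Icc (-(k*W')) (k*W'-1),
        alpha (k*H') (k*W') k w u v u' v' * dft (k*H') (k*W') X u' v'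
      = ∑ x ∈ Finset.Icc (-(k*H')) (k*H'-1), ∑ y ∈ Finset.Icc (-(k*W')) (k*W'-1),
          X x y * ∑ u' ∈ Finset.Icc (-(k*H')) (k*H'-1), ∑ v' ∈ Finset.Icc (-(k*W')) (k*W'-1),
            alpha (k*H') (k*W') k w u v u' v' *
              Complex.exp (-(2 * (Real.pi:ℂ) * Complex.I) *
                ((u':ℂ) * (x:ℂ) / (2 * ((k*H' : ℤ):ℂ)) + (v':ℂ) * (y:ℂ) / (2 * ((k*W' : ℤ):ℂ)))) := by
    unfold dft
    calc ∑ u' ∈ Finset.Icc (-(k*H')) (k*H'-1), ∑ v' ∈ Finset.Icc (-(k*W')) (k*W'-1),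
          alpha (k*H') (k*W') k w u v u' v' *
            ∑ x ∈ Finset.Icc (-(k*H')) (k*H'-1), ∑ y ∈ Finset.Icc (-(k*W')) (k*W'-1),
              X x y * Complex.exp (-(2 * (Real.pi:ℂ) * Complex.I) *
                ((u':ℂ) * (x:ℂ) / (2 * ((k*H' : ℤ):ℂ)) + (v':ℂ) * (y:ℂ) / (2 * ((k*W' : ℤ):ℂ))))
        = ∑ u' ∈ Finset.Icc (-(k*H')) (k*H'-1), ∑ v' ∈ Finset.Icc (-(k*W')) (k*W'-1),
            ∑ x ∈ Finset.Icc (-(k*H')) (k*H'-1), ∑ y ∈ Finset.Icc (-(k*W')) (k*W'-1),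
              alpha (k*H') (k*W') k w u v u' v' *
                (X x y * Complex.exp (-(2 * (Real.pi:ℂ) * Complex.I) *
                  ((u':ℂ) * (x:ℂ) / (2 * ((k*H' : ℤ):ℂ)) + (v':ℂ) * (y:ℂ) / (2 * ((k*W' : ℤ):ℂ))))) := by
            refine Finset.sum_congr rfl fun u' _ => Finset.sum_congr rfl fun v' _ => ?_
            rw [Finset.mul_sum]
            exact Finset.sum_congr rfl fun x _ => Finset.mul_sum _ _ _
      _ = ∑ x ∈ Finset.Icc (-(k*H')) (k*H'-1), ∑ y ∈ Finset.Icc (-(k*W')) (k*W'-1),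
            ∑ u' ∈ Finset.Icc (-(k*H')) (k*H'-1), ∑ v' ∈ Finset.Icc (-(k*W')) (k*W'-1),
              alpha (k*H') (k*W') k w u v u' v' *
                (X x y * Complex.exp (-(2 * (Real.pi:ℂ) * Complex.I) *
                  ((u':ℂ) * (x:ℂ) / (2 * ((k*H' : ℤ):ℂ)) + (v':ℂ) * (y:ℂ) / (2 * ((k*W' : ℤ):ℂ))))) :=
            swap4 _ _ _ _ _
      _ = ∑ x ∈ Finset.Icc (-(k*H')) (k*H'-1), ∑ y ∈ Finset.Icc (-(k*W')) (k*W'-1),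
          X x y * ∑ u' ∈ Finset.Icc (-(k*H')) (k*H'-1), ∑ v' ∈ Finset.Icc (-(k*W')) (k*W'-1),
            alpha (k*H') (k*W') k w u v u' v' *
              Complex.exp (-(2 * (Real.pi:ℂ) * Complex.I) *
                ((u':ℂ) * (x:ℂ) / (2 * ((k*H' : ℤ):ℂ)) + (v':ℂ) * (y:ℂ) / (2 * ((k*W' : ℤ):ℂ)))) := by
            refine Finset.sum_congr rfl fun x _ => Finset.sum_congr rfl fun y _ => ?_
            rw [Finset.mul_sum]
            refine Finset.sum_congr rfl fun u' _ => ?_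
            rw [Finset.mul_sum]
            exact Finset.sum_congr rfl fun v' _ => by ring
  rw [hRHS]
  refine Finset.sum_congr rfl fun x _ => Finset.sum_congr rfl fun y _ => ?_
  rw [inner_eval H' W' k hk hH' hW' w u v x y]
  ring
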